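/- Let E be a real inner product space, p ≥ 2 an integer, ε > 0, M > 0, and 0 < C ≤ M^{p−1} / p^p. Let f, h : E → ℝ be differentiable with f convex, let x* satisfy f(x*) ≤ f(x) for all x, and assume h is 1-uniformly convex of order p. Let x, y, z : ℕ → E satisfy z 0 = x 0 and, for all k ≥ 0: x(k+1) = (p/(k+p)) • z k + (k/(k+p)) • y k; ∇h(z(k+1)) = ∇h(z k) − (ε C p (k+1)^{(p−1)}) • ∇f(y(k+1)); and ⟨∇f(y k), x k − y k⟩ ≥ M ε^{1/(p−1)} ‖∇f(y k)‖^{p/(p−1)}. Then for all k ≥ 1: f(y k) − f(x*) ≤ D_h(x*, x 0) / (C ε k^{(p)}). -/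

import Mathlib

open Real
open scoped RealInnerProductSpace

/-- The rising factorial `k^{(q)} = k (k+1) ⋯ (k+q−1)`. -/
def risingFactorial (k q : ℕ) : ℕ := ∏ i ∈ Finset.range q, (k + i)


lemma rf_succ (k q : ℕ) : risingFactorial k (q+1) = risingFactorial k q * (k+q) :=
  Finset.prod_range_succ _ _

lemma rf_succ' (k q : ℕ) : risingFactorial k (q+1) = k * risingFactorial (k+1) q := by
  unfold risingFactorial
  rw [Finset.prod_range_succ']
  simp only [Nat.add_zero]
  rw [mul_comm]
  congr 1
  exact Finset.prod_congr rfl (fun i _ => by omega)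

lemma one_le_rf (k q : ℕ) : 1 ≤ risingFactorial (k+1) q :=
  Finset.one_le_prod' (fun i _ => by omega)

lemma rf_le_pow (k q : ℕ) : risingFactorial (k+1) q ≤ (k+1+q)^q := by
  unfold risingFactorial
  calc ∏ i ∈ Finset.range q, (k+1+i) ≤ ∏ _i ∈ Finset.range q, (k+1+q) :=
        Finset.prod_le_prod' (fun i hi => by have := Finset.mem_range.mp hi; omega)
    _ = (k+1+q)^q := by rw [Finset.prod_const, Finset.card_range]

lemma rf_zero (p : ℕ) (hp : 1 ≤ p) : risingFactorial 0 p = 0 := by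
  unfold risingFactorial
  exact Finset.prod_eq_zero (i := 0) (Finset.mem_range.mpr (by omega)) rfl

lemma key_scalar (p : ℕ) (hp : 2 ≤ p) {ε M C R K G : ℝ}
    (hε : 0 < ε) (hM : 0 < M) (hC : 0 < C)
    (hC' : C ≤ M ^ (p - 1) / (p : ℝ) ^ p)
    (hR : 0 ≤ R) (hK : 0 ≤ K) (hG : 0 ≤ G)
    (hRK : R ≤ K ^ (p - 1)) :
    (((p:ℝ)-1)/p) * ((ε*C*p*R) * G) ^ ((p:ℝ)/((p:ℝ)-1)) ≤
      (C*ε*(R*K)) * (M * ε ^ (1/((p:ℝ)-1)) * G ^ ((p:ℝ)/((p:ℝ)-1))) := by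
  set r : ℝ := (p:ℝ) with hrdef
  have hr2 : (2:ℝ) ≤ r := by rw [hrdef]; exact_mod_cast hp
  have hr1 : (0:ℝ) < r - 1 := by linarith
  have hr0 : (0:ℝ) < r := by linarith
  set t : ℝ := 1/(r-1) with htdef
  have ht0 : 0 < t := by positivity
  have hq : r/(r-1) = 1 + t := by rw [htdef]; field_simp; ring
  have hcast : ((p-1 : ℕ) : ℝ) = r - 1 := by
    rw [Nat.cast_sub (by omega : 1 ≤ p), hrdef]; norm_num
  -- bound R^t ≤ K
  have hRt : R ^ t ≤ K := by
    calc R ^ t ≤ (K ^ (p-1)) ^ t := Real.rpow_le_rpow hR hRK ht0.le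
      _ = K := by
        rw [← Real.rpow_natCast K (p-1), ← Real.rpow_mul hK, hcast]
        rw [show (r-1)*t = 1 by rw [htdef]; field_simp, Real.rpow_one]
  -- bound (C*p)^t ≤ M/p
  have hCp : 0 < C * r := by positivity
  have hCpt : (C * r) ^ t ≤ M / r := by
    have h1 : C * r ≤ (M/r) ^ (p-1) := by
      rw [div_pow]
      rw [le_div_iff₀ (by positivity)]
      have hpp : (r:ℝ)^p = r^(p-1) * r := by
        rw [← pow_succ]; congr 1; omega
      have := (le_div_iff₀ (by positivity : (0:ℝ) < r^p)).mp hC'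
      nlinarith [pow_pos hr0 (p-1)]
    calc (C*r) ^ t ≤ ((M/r)^(p-1)) ^ t := Real.rpow_le_rpow hCp.le h1 ht0.le
      _ = M/r := by
        rw [← Real.rpow_natCast (M/r) (p-1), ← Real.rpow_mul (by positivity), hcast]
        rw [show (r-1)*t = 1 by rw [htdef]; field_simp, Real.rpow_one]
  -- expand the rpow of the product
  have hx1 : ((ε*C*r*R) * G) ^ (r/(r-1)) =
      (ε * ε^t) * ((C*r) * (C*r)^t) * (R * R^t) * G ^ (r/(r-1)) := by
    have e1 : (ε*C*r*R)*G = (ε * (C*r) * R) * G := by ring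
    rw [e1, Real.mul_rpow (by positivity) hG,
        Real.mul_rpow (by positivity) hR,
        Real.mul_rpow (by positivity) (by positivity : (0:ℝ) ≤ C*r),
        hq, Real.rpow_add hε, Real.rpow_one,
        Real.rpow_add hCp, Real.rpow_one,
        Real.rpow_add' hR (by positivity), Real.rpow_one]
  rw [hx1]
  have hGq : 0 ≤ G ^ (r/(r-1)) := Real.rpow_nonneg hG _
  have hεt : 0 ≤ ε ^ t := Real.rpow_nonneg hε.le _
  have hfrac : (r-1)/r ≤ 1 := by rw [div_le_one hr0]; linarith
  calc ((r-1)/r) * ((ε * ε^t) * ((C*r) * (C*r)^t) * (R * R^t) * G ^ (r/(r-1)))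
      ≤ 1 * ((ε * ε^t) * ((C*r) * (M/r)) * (R * K) * G ^ (r/(r-1))) := by
        apply mul_le_mul hfrac ?_ (by positivity) zero_le_one
        apply mul_le_mul ?_ le_rfl hGq (by positivity)
        apply mul_le_mul ?_ ?_ (by positivity) (by positivity)
        · exact mul_le_mul le_rfl (mul_le_mul le_rfl hCpt (Real.rpow_nonneg hCp.le _) hCp.le) (by positivity) (by positivity)
        · exact mul_le_mul le_rfl hRt (Real.rpow_nonneg hR _) hR
    _ = (C*ε*(R*K)) * (M * ε ^ t * G ^ (r/(r-1))) := by
        field_simp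

lemma bregman_rearrange {E : Type*} [NormedAddCommGroup E] [InnerProductSpace ℝ E] [CompleteSpace E]
    (h : E → ℝ) (a b c : E) :
    h a - h c - ⟪gradient h c, a - c⟫ =
      (h a - h b - ⟪gradient h b, a - b⟫) - (h c - h b - ⟪gradient h b, c - b⟫)
        + ⟪gradient h b - gradient h c, a - c⟫ := by
  simp only [inner_sub_left, inner_sub_right]; ring

/-- Convergence rate of the rate-matching discretization of the
polynomial Euler–Lagrange equation (Theorem 3 of the paper):
`f (y k) − f x* ≤ D_h(x*, x 0) / (C ε k^{(p)})`. -/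
theorem accelerated_discretization_rate
    {E : Type*} [NormedAddCommGroup E] [InnerProductSpace ℝ E] [CompleteSpace E]
    (p : ℕ) (hp : 2 ≤ p) (ε M C : ℝ) (hε : 0 < ε) (hM : 0 < M)
    (hC : 0 < C) (hC' : C ≤ M ^ (p - 1) / (p : ℝ) ^ p)
    (f h : E → ℝ) (hf : Differentiable ℝ f) (hh : Differentiable ℝ h)
    (hfconv : ∀ a b : E, f a + ⟪gradient f a, b - a⟫ ≤ f b)
    (xstar : E) (hmin : ∀ a, f xstar ≤ f a)
    (hhuc : ∀ a b : E, (1 / (p : ℝ)) * ‖b - a‖ ^ p ≤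
      h b - h a - ⟪gradient h a, b - a⟫)
    (x y z : ℕ → E) (hz0 : z 0 = x 0)
    (hx : ∀ k : ℕ, x (k + 1) =
      ((p : ℝ) / ((k : ℝ) + (p : ℝ))) • z k + ((k : ℝ) / ((k : ℝ) + (p : ℝ))) • y k)
    (hz : ∀ k : ℕ, gradient h (z (k + 1)) = gradient h (z k)
      - (ε * C * (p : ℝ) * (risingFactorial (k + 1) (p - 1) : ℝ)) • gradient f (y (k + 1)))
    (hy : ∀ k : ℕ, M * ε ^ (1 / ((p : ℝ) - 1)) *
        ‖gradient f (y k)‖ ^ ((p : ℝ) / ((p : ℝ) - 1))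
      ≤ ⟪gradient f (y k), x k - y k⟫) :
    ∀ k : ℕ, 1 ≤ k → f (y k) - f xstar ≤
      (h xstar - h (x 0) - ⟪gradient h (x 0), xstar - x 0⟫) /
        (C * ε * (risingFactorial k p : ℝ)) := by
  have hr2 : (2:ℝ) ≤ (p:ℝ) := by exact_mod_cast hp
  have hr1 : (0:ℝ) < (p:ℝ) - 1 := by linarith
  have hr0 : (0:ℝ) < (p:ℝ) := by linarith
  set A : ℕ → ℝ := fun j => C * ε * (risingFactorial j p : ℝ) with hA
  set D : E → E → ℝ := fun a b => h a - h b - ⟪gradient h b, a - b⟫ with hD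
  have hDval : ∀ a b : E, D a b = h a - h b - ⟪gradient h b, a - b⟫ := fun a b => rfl
  have hDnn : ∀ a b : E, 0 ≤ D a b := fun a b =>
    le_trans (by positivity) (hhuc b a)
  have step : ∀ k : ℕ, A (k+1) * (f (y (k+1)) - f xstar) + D xstar (z (k+1)) ≤
      A k * (f (y k) - f xstar) + D xstar (z k) := by
    intro k
    set g := gradient f (y (k+1)) with hg
    set R : ℝ := (risingFactorial (k+1) (p-1) : ℝ) with hRdef
    have hR1 : (1:ℝ) ≤ R := by rw [hRdef]; exact_mod_cast one_le_rf k (p-1)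
    have hRnn : (0:ℝ) ≤ R := by linarith
    set τ : ℝ := ε * C * (p:ℝ) * R with hτ
    have hτnn : 0 ≤ τ := by rw [hτ]; positivity
    have hKpos : (0:ℝ) < (k:ℝ) + p := by positivity
    have e1 : (risingFactorial k p : ℝ) = (k:ℝ) * R := by
      have e : risingFactorial k p = k * risingFactorial (k+1) (p-1) := by
        conv_lhs => rw [show p = (p-1)+1 by omega]
        exact rf_succ' k (p-1)
      rw [hRdef, e]; push_cast; ring
    have e2 : (risingFactorial (k+1) p : ℝ) = R * ((k:ℝ) + p) := by
      have e : risingFactorial (k+1) p = risingFactorial (k+1) (p-1) * (k+p) := by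
        conv_lhs => rw [show p = (p-1)+1 by omega]
        rw [rf_succ]
        congr 1
        omega
      rw [hRdef, e]; push_cast; ring
    have hA1 : A (k+1) = A k + τ := by
      simp only [hA]; rw [e1, e2, hτ]; ring
    have hAknn : 0 ≤ A k := by
      simp only [hA]; positivity
    have hAk1nn : 0 ≤ A (k+1) := by
      simp only [hA]; positivity
    have hxrel : A (k+1) • x (k+1) = τ • z k + A k • y k := by
      rw [hx k, smul_add, smul_smul, smul_smul]
      congr 1
      · congr 1
        simp only [hA]; rw [e2, hτ]; field_simp
      · congr 1
        simp only [hA]; rw [e1, e2]; field_simp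
    have hvec : A (k+1) • (y (k+1) - x (k+1)) + τ • (z k - z (k+1)) =
        A k • (y (k+1) - y k) + τ • (y (k+1) - z (k+1)) := by
      rw [smul_sub, smul_sub, smul_sub, smul_sub, hxrel, hA1]
      module
    have hinner : A (k+1) * ⟪g, y (k+1) - x (k+1)⟫ + τ * ⟪g, z k - z (k+1)⟫ =
        A k * ⟪g, y (k+1) - y k⟫ + τ * ⟪g, y (k+1) - z (k+1)⟫ := by
      have h9 := congrArg (fun v : E => ⟪g, v⟫) hvec
      simpa only [inner_add_right, real_inner_smul_right] using h9
    have hgz : gradient h (z k) - gradient h (z (k+1)) = τ • g := by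
      rw [hz k, hτ, hg, hRdef]; exact sub_sub_cancel _ _
    have hBreg : D xstar (z (k+1)) =
        D xstar (z k) - D (z (k+1)) (z k) + τ * ⟪g, xstar - z (k+1)⟫ := by
      rw [hDval, hDval, hDval, bregman_rearrange h xstar (z k) (z (k+1)), hgz,
        real_inner_smul_left]
    have hsplit : τ * ⟪g, xstar - z (k+1)⟫ =
        τ * ⟪g, xstar - y (k+1)⟫ + τ * ⟪g, y (k+1) - z (k+1)⟫ := by
      simp only [inner_sub_right]; ring
    have hc1 : τ * ⟪g, xstar - y (k+1)⟫ ≤ τ * (f xstar - f (y (k+1))) := by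
      apply mul_le_mul_of_nonneg_left ?_ hτnn
      have := hfconv (y (k+1)) xstar
      linarith
    have hc2 : A k * (f (y (k+1)) - f (y k)) ≤ A k * ⟪g, y (k+1) - y k⟫ := by
      apply mul_le_mul_of_nonneg_left ?_ hAknn
      have h3 := hfconv (y (k+1)) (y k)
      simp only [inner_sub_right] at h3 ⊢
      linarith
    have hA1' : A (k+1) * (f (y (k+1)) - f xstar) =
        A k * (f (y (k+1)) - f xstar) + τ * (f (y (k+1)) - f xstar) := by
      rw [hA1]; ring
    have hc3 : A (k+1) * ⟪g, y (k+1) - x (k+1)⟫ ≤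
        -(A (k+1) * (M * ε ^ (1/((p:ℝ)-1)) * ‖g‖ ^ ((p:ℝ)/((p:ℝ)-1)))) := by
      have h5 := hy (k+1)
      have h6 : ⟪g, y (k+1) - x (k+1)⟫ ≤
          -(M * ε ^ (1/((p:ℝ)-1)) * ‖g‖ ^ ((p:ℝ)/((p:ℝ)-1))) := by
        rw [hg]
        simp only [inner_sub_right] at h5 ⊢
        linarith
      calc A (k+1) * ⟪g, y (k+1) - x (k+1)⟫
          ≤ A (k+1) * (-(M * ε ^ (1/((p:ℝ)-1)) * ‖g‖ ^ ((p:ℝ)/((p:ℝ)-1)))) :=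
            mul_le_mul_of_nonneg_left h6 hAk1nn
        _ = -(A (k+1) * (M * ε ^ (1/((p:ℝ)-1)) * ‖g‖ ^ ((p:ℝ)/((p:ℝ)-1)))) := by ring
    set s : ℝ := ‖z (k+1) - z k‖ with hs
    have hs0 : 0 ≤ s := norm_nonneg _
    have hDz : (1/(p:ℝ)) * s ^ p ≤ D (z (k+1)) (z k) := hhuc (z k) (z (k+1))
    have hconj : ((p:ℝ)/((p:ℝ)-1)).HolderConjugate (p:ℝ) := by
      rw [Real.holderConjugate_iff]; constructor
      · rw [lt_div_iff₀ hr1]; linarith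
      · rw [inv_div]; field_simp; ring
    have hyoung : (τ * ‖g‖) * s ≤
        (((p:ℝ)-1)/(p:ℝ)) * (τ*‖g‖) ^ ((p:ℝ)/((p:ℝ)-1)) + (1/(p:ℝ)) * s ^ p := by
      have hyi := Real.young_inequality_of_nonneg (a := τ * ‖g‖) (b := s)
        (by positivity) hs0 hconj
      rw [Real.rpow_natCast] at hyi
      have hd1 : (τ*‖g‖) ^ ((p:ℝ)/((p:ℝ)-1)) / ((p:ℝ)/((p:ℝ)-1)) =
          (((p:ℝ)-1)/(p:ℝ)) * (τ*‖g‖) ^ ((p:ℝ)/((p:ℝ)-1)) := by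
        field_simp
      have hd2 : s ^ p / (p:ℝ) = (1/(p:ℝ)) * s ^ p := by ring
      rw [hd1, hd2] at hyi
      exact hyi
    have hcs : τ * ⟪g, z k - z (k+1)⟫ ≤ (τ * ‖g‖) * s := by
      have hle := real_inner_le_norm g (z k - z (k+1))
      have hnorm : ‖z k - z (k+1)‖ = s := by rw [hs]; exact norm_sub_rev _ _
      calc τ * ⟪g, z k - z (k+1)⟫ ≤ τ * (‖g‖ * ‖z k - z (k+1)‖) :=
            mul_le_mul_of_nonneg_left hle hτnn
        _ = (τ * ‖g‖) * s := by rw [hnorm]; ring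
    have hKscalar : (((p:ℝ)-1)/(p:ℝ)) * (τ * ‖g‖) ^ ((p:ℝ)/((p:ℝ)-1)) ≤
        A (k+1) * (M * ε ^ (1/((p:ℝ)-1)) * ‖g‖ ^ ((p:ℝ)/((p:ℝ)-1))) := by
      have hRK : R ≤ ((k:ℝ) + p) ^ (p-1) := by
        have h8 := rf_le_pow k (p-1)
        rw [show k+1+(p-1) = k+p by omega] at h8
        calc R ≤ (((k+p : ℕ) : ℝ))^(p-1) := by
              rw [hRdef]; exact_mod_cast h8
          _ = ((k:ℝ)+p)^(p-1) := by push_cast; ring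
      have hks := key_scalar p hp hε hM hC hC' hRnn (le_of_lt hKpos) (norm_nonneg g) hRK
      rw [show A (k+1) = C*ε*(R*((k:ℝ)+p)) from by simp only [hA]; rw [e2], hτ]
      exact hks
    clear_value A D g R τ s
    linarith [hc1, hc2, hc3, hyoung, hcs, hKscalar, hDz, hBreg, hinner, hsplit, hA1']
  have mono : ∀ k, A k * (f (y k) - f xstar) + D xstar (z k) ≤ D xstar (x 0) := by
    intro k
    induction k with
    | zero =>
      have hA0 : A 0 = 0 := by
        simp only [hA, rf_zero p (by omega : 1 ≤ p)]
        norm_num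
      rw [hA0, hz0]; simp
    | succ n ih => exact le_trans (step n) ih
  intro k hk
  obtain ⟨j, rfl⟩ : ∃ j, k = j + 1 := ⟨k-1, by omega⟩
  have h1 : (1:ℝ) ≤ (risingFactorial (j+1) p : ℝ) := by exact_mod_cast one_le_rf j p
  have hpos : (0:ℝ) < C * ε * (risingFactorial (j+1) p : ℝ) := mul_pos (mul_pos hC hε) (by linarith)
  have hgoal := mono (j+1)
  have hDpos := hDnn xstar (z (j+1))
  rw [show h xstar - h (x 0) - ⟪gradient h (x 0), xstar - x 0⟫ = D xstar (x 0) from rfl,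
    le_div_iff₀ hpos]
  simp only [hA] at hgoal
  nlinarith [hgoal, hDpos]
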